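/- Let U ⊆ ℂ be a nonempty connected open set and let f : ℂ → M_d(ℂ) be analytic on U with f'(x) invertible for all x ∈ U. If the matrix-valued Schwartz derivative of f vanishes identically on U, i.e. S(f)(x) = 0 for all x ∈ U, then there exists an invertible 2d×2d complex matrix (A B; C D), written in d×d blocks, such that x·C+D is invertible and f(x) = (x·A+B)·(x·C+D)⁻¹ for all x ∈ U. -/

import Mathlib

open Matrix

attribute [local instance] Matrix.normedAddCommGroup Matrix.normedSpace

open Set Filter Metric
open scoped Topology

/-- The matrix-valued Schwartz derivative coefficient
`S(f) = ((f')⁻¹f'')' - (1/2)((f')⁻¹f'')²`. -/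
noncomputable def matS {d : ℕ} (f : ℂ → Matrix (Fin d) (Fin d) ℂ) :
    ℂ → Matrix (Fin d) (Fin d) ℂ :=
  fun x => deriv (fun t => (deriv f t)⁻¹ * deriv (deriv f) t) x
    - (1 / 2 : ℂ) • ((deriv f x)⁻¹ * deriv (deriv f) x) ^ 2


variable {d : ℕ}

noncomputable def entryCLM (i j : Fin d) : Matrix (Fin d) (Fin d) ℂ →L[ℂ] ℂ :=
  (ContinuousLinearMap.proj (R := ℂ) (φ := fun _ : Fin d => ℂ) j).comp
    (ContinuousLinearMap.proj (R := ℂ) (φ := fun _ : Fin d => Fin d → ℂ) i)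

@[simp] lemma entryCLM_apply (i j : Fin d) (A : Matrix (Fin d) (Fin d) ℂ) :
    entryCLM i j A = A i j := rfl

lemma analyticOnNhd_entry {U : Set ℂ} {u : ℂ → Matrix (Fin d) (Fin d) ℂ}
    (hu : AnalyticOnNhd ℂ u U) (i j : Fin d) :
    AnalyticOnNhd ℂ (fun x => u x i j) U :=
  fun x hx => ((entryCLM i j).analyticAt _).comp (hu x hx)

lemma analyticOnNhd_of_entries {U : Set ℂ} {u : ℂ → Matrix (Fin d) (Fin d) ℂ}
    (hu : ∀ i j, AnalyticOnNhd ℂ (fun x => u x i j) U) :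
    AnalyticOnNhd ℂ u U :=
  AnalyticOnNhd.pi fun i => AnalyticOnNhd.pi fun j => hu i j

lemma hasDerivAt_matrix {u : ℂ → Matrix (Fin d) (Fin d) ℂ} {u' : Matrix (Fin d) (Fin d) ℂ} {x : ℂ} :
    HasDerivAt u u' x ↔ ∀ i j, HasDerivAt (fun t => u t i j) (u' i j) x := by
  exact hasDerivAt_pi.trans (forall_congr' fun i => hasDerivAt_pi)

lemma HasDerivAt.matMul {u v : ℂ → Matrix (Fin d) (Fin d) ℂ}
    {u' v' : Matrix (Fin d) (Fin d) ℂ} {x : ℂ}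
    (hu : HasDerivAt u u' x) (hv : HasDerivAt v v' x) :
    HasDerivAt (fun t => u t * v t) (u' * v x + u x * v') x := by
  rw [hasDerivAt_matrix] at hu hv ⊢
  intro i j
  have : ∀ t, (u t * v t) i j = ∑ k, u t i k * v t k j := fun t => Matrix.mul_apply
  simp only [this, Matrix.add_apply, Matrix.mul_apply]
  have h : HasDerivAt (fun t => ∑ k, u t i k * v t k j)
      (∑ k, (u' i k * v x k j + u x i k * v' k j)) x :=
    HasDerivAt.fun_sum fun k _ => by simpa [mul_comm] using (hu i k).fun_mul (hv k j)
  simpa [Finset.sum_add_distrib] using h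

lemma AnalyticOnNhd.matMul {U : Set ℂ} {u v : ℂ → Matrix (Fin d) (Fin d) ℂ}
    (hu : AnalyticOnNhd ℂ u U) (hv : AnalyticOnNhd ℂ v U) :
    AnalyticOnNhd ℂ (fun x => u x * v x) U := by
  refine analyticOnNhd_of_entries fun i j => ?_
  have : (fun x => (u x * v x) i j) = fun x => ∑ k, u x i k * v x k j := by
    funext x; exact Matrix.mul_apply
  rw [this]
  exact Finset.analyticOnNhd_fun_sum _ fun k _ =>
    (analyticOnNhd_entry hu i k).mul (analyticOnNhd_entry hv k j)

lemma AnalyticOnNhd.matSmul {U : Set ℂ} {c : ℂ → ℂ} {u : ℂ → Matrix (Fin d) (Fin d) ℂ}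
    (hc : AnalyticOnNhd ℂ c U) (hu : AnalyticOnNhd ℂ u U) :
    AnalyticOnNhd ℂ (fun x => c x • u x) U := by
  refine analyticOnNhd_of_entries fun i j => ?_
  have : (fun x => (c x • u x) i j) = fun x => c x * u x i j := rfl
  rw [this]
  exact hc.mul (analyticOnNhd_entry hu i j)

lemma AnalyticOnNhd.matDet {U : Set ℂ} {u : ℂ → Matrix (Fin d) (Fin d) ℂ}
    (hu : AnalyticOnNhd ℂ u U) :
    AnalyticOnNhd ℂ (fun x => (u x).det) U := by
  have : (fun x => (u x).det)
      = fun x => ∑ σ : Equiv.Perm (Fin d), ((Equiv.Perm.sign σ : ℤ) : ℂ) * ∏ i, u x (σ i) i := by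
    funext x; simp [Matrix.det_apply, Units.smul_def, zsmul_eq_mul]
  rw [this]
  exact Finset.analyticOnNhd_fun_sum _ fun σ _ =>
    (analyticOnNhd_const).mul <|
      Finset.analyticOnNhd_fun_prod _ fun i _ => analyticOnNhd_entry hu (σ i) i

lemma AnalyticOnNhd.matAdjugate {U : Set ℂ} {u : ℂ → Matrix (Fin d) (Fin d) ℂ}
    (hu : AnalyticOnNhd ℂ u U) :
    AnalyticOnNhd ℂ (fun x => (u x).adjugate) U := by
  refine analyticOnNhd_of_entries fun i j => ?_
  have : (fun x => (u x).adjugate i j)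
      = fun x => ((u x).updateRow j (Pi.single i 1)).det := by
    funext x; rw [Matrix.adjugate_apply]
  rw [this]
  refine AnalyticOnNhd.matDet (analyticOnNhd_of_entries fun k l => ?_)
  rcases eq_or_ne k j with rfl | hk
  · simp only [Matrix.updateRow_self]
    exact analyticOnNhd_const
  · simp only [Matrix.updateRow_ne hk]
    exact analyticOnNhd_entry hu k l

lemma AnalyticOnNhd.matInv {U : Set ℂ} {u : ℂ → Matrix (Fin d) (Fin d) ℂ}
    (hu : AnalyticOnNhd ℂ u U) (hu' : ∀ x ∈ U, IsUnit (u x)) :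
    AnalyticOnNhd ℂ (fun x => (u x)⁻¹) U := by
  have : (fun x => (u x)⁻¹) = fun x => ((u x).det)⁻¹ • (u x).adjugate := by
    funext x; rw [Matrix.inv_def, Ring.inverse_eq_inv']
  rw [this]
  exact AnalyticOnNhd.matSmul
    (hu.matDet.inv fun x hx => ((Matrix.isUnit_iff_isUnit_det _).mp (hu' x hx)).ne_zero)
    hu.matAdjugate

variable {E : Type*} [NormedAddCommGroup E] [NormedSpace ℂ E] [CompleteSpace E]

lemma iteratedDeriv_zero_fun {n : ℕ} {x : ℂ} : iteratedDeriv n (fun _ : ℂ => (0 : E)) x = 0 := by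
  induction n generalizing x with
  | zero => simp
  | succ n ih =>
    rw [iteratedDeriv_succ']
    have : deriv (fun _ : ℂ => (0 : E)) = fun _ : ℂ => (0 : E) := by
      funext t; simp [deriv_const]
    rw [this]; exact ih

lemma iteratedDeriv_add_of_analyticAt {u v : ℂ → E} {x₀ : ℂ} (n : ℕ)
    (hu : AnalyticAt ℂ u x₀) (hv : AnalyticAt ℂ v x₀) :
    iteratedDeriv n (fun x => u x + v x) x₀
      = iteratedDeriv n u x₀ + iteratedDeriv n v x₀ := by
  obtain ⟨s, hs, hsa⟩ := hu.exists_mem_nhds_analyticOnNhd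
  obtain ⟨t, ht, hta⟩ := hv.exists_mem_nhds_analyticOnNhd
  obtain ⟨r, hr, hball⟩ := Metric.mem_nhds_iff.1 (inter_mem hs ht)
  have hO : IsOpen (ball x₀ r) := isOpen_ball
  have hx : x₀ ∈ ball x₀ r := mem_ball_self hr
  have hud : AnalyticOnNhd ℂ u (ball x₀ r) := hsa.mono fun z hz => (hball hz).1
  have hvd : AnalyticOnNhd ℂ v (ball x₀ r) := hta.mono fun z hz => (hball hz).2
  have h1 : ∀ (w : ℂ → E), iteratedDerivWithin n w (ball x₀ r) x₀ = iteratedDeriv n w x₀ := by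
    intro w
    rw [iteratedDerivWithin_eq_iteratedFDerivWithin, iteratedDeriv_eq_iteratedFDeriv,
      iteratedFDerivWithin_of_isOpen n hO hx]
  calc iteratedDeriv n (fun x => u x + v x) x₀
      = iteratedDerivWithin n (u + v) (ball x₀ r) x₀ := (h1 (u + v)).symm
    _ = iteratedDerivWithin n u (ball x₀ r) x₀ + iteratedDerivWithin n v (ball x₀ r) x₀ :=
        iteratedDerivWithin_add hx hO.uniqueDiffOn
          (hud.contDiffOn_of_completeSpace.of_le le_top x₀ hx)
          (hvd.contDiffOn_of_completeSpace.of_le le_top x₀ hx)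
    _ = iteratedDeriv n u x₀ + iteratedDeriv n v x₀ := by rw [h1 u, h1 v]

lemma iteratedDeriv_sum_of_analyticAt {ι : Type*} (s : Finset ι) {u : ι → ℂ → E} {x₀ : ℂ} (n : ℕ)
    (hu : ∀ i ∈ s, AnalyticAt ℂ (u i) x₀) :
    iteratedDeriv n (fun x => ∑ i ∈ s, u i x) x₀ = ∑ i ∈ s, iteratedDeriv n (u i) x₀ := by
  classical
  induction s using Finset.induction with
  | empty => simpa using iteratedDeriv_zero_fun
  | insert a s' hnotmem ih =>
    simp only [Finset.sum_insert hnotmem]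
    rw [iteratedDeriv_add_of_analyticAt n (hu a (Finset.mem_insert_self a s'))
      (Finset.analyticAt_fun_sum _ fun i hi => hu i (Finset.mem_insert_of_mem hi)),
      ih fun i hi => hu i (Finset.mem_insert_of_mem hi)]

lemma AnalyticAt.deriv' {F : Type*} [NormedAddCommGroup F] [NormedSpace ℂ F] [CompleteSpace F]
    {f : ℂ → F} {x : ℂ} (h : AnalyticAt ℂ f x) : AnalyticAt ℂ (deriv f) x :=
  ((ContinuousLinearMap.apply ℂ F (1 : ℂ)).analyticAt _).comp h.fderiv

/-- Leibniz-type vanishing: if all derivatives of `v` up to `n` vanish at `x₀`,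
then the `n`-th derivative of `u * v` vanishes at `x₀`. -/
lemma iteratedDeriv_mul_eq_zero : ∀ (n : ℕ) (u v : ℂ → ℂ) (x₀ : ℂ),
    AnalyticAt ℂ u x₀ → AnalyticAt ℂ v x₀ →
    (∀ k ≤ n, iteratedDeriv k v x₀ = 0) →
    iteratedDeriv n (fun x => u x * v x) x₀ = 0 := by
  intro n
  induction n with
  | zero => intro u v x₀ _ _ hv; simpa using Or.inr (hv 0 le_rfl)
  | succ n ih =>
    intro u v x₀ hu hv hvz
    rw [iteratedDeriv_succ']
    have hev : deriv (fun x => u x * v x) =ᶠ[𝓝 x₀]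
        fun x => deriv u x * v x + u x * deriv v x := by
      filter_upwards [hu.eventually_analyticAt, hv.eventually_analyticAt] with x hux hvx
      exact deriv_mul hux.differentiableAt hvx.differentiableAt
    rw [hev.iteratedDeriv_eq n,
      iteratedDeriv_add_of_analyticAt n (hu.deriv'.fun_mul hv) (hu.fun_mul hv.deriv'),
      ih _ _ _ hu.deriv' hv (fun k hk => hvz k (le_trans hk (Nat.le_succ n))),
      ih _ _ _ hu hv.deriv' (fun k hk => by
        rw [← iteratedDeriv_succ']
        exact hvz (k + 1) (Nat.succ_le_succ hk)), add_zero]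

/-- A function differentiable on a ball whose iterated derivatives all vanish at the center
vanishes on the ball. -/
lemma eqOn_zero_of_iteratedDeriv_zero {u : ℂ → E} {x₀ : ℂ} {r : ℝ}
    (hu : DifferentiableOn ℂ u (ball x₀ r))
    (h : ∀ n, iteratedDeriv n u x₀ = 0) :
    ∀ z ∈ ball x₀ r, u z = 0 := by
  intro z hz
  have := Complex.hasSum_taylorSeries_on_ball hu hz
  simp only [h, smul_zero] at this
  exact (this.unique hasSum_zero).symm ▸ rfl
lemma ode_vanish {d : ℕ} {U : Set ℂ} (hU : IsOpen U) (hconn : IsPreconnected U) {x₀ : ℂ}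
    (hx₀ : x₀ ∈ U)
    {φ ρ : ℂ → Matrix (Fin d) (Fin d) ℂ} (hφ : AnalyticOnNhd ℂ φ U)
    (hρ : AnalyticOnNhd ℂ ρ U)
    (hd : ∀ x ∈ U, HasDerivAt ρ (φ x * ρ x) x) (h0 : ρ x₀ = 0) :
    Set.EqOn ρ 0 U := by
  have key : ∀ n (i j : Fin d), iteratedDeriv n (fun x => ρ x i j) x₀ = 0 := by
    intro n
    induction n using Nat.strong_induction_on with
    | _ n IH =>
      intro i j
      match n with
      | 0 =>
        simp only [iteratedDeriv_zero]
        rw [h0]; rfl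
      | (m+1) =>
        rw [iteratedDeriv_succ']
        have hev : deriv (fun x => ρ x i j) =ᶠ[𝓝 x₀] fun x => ∑ k, φ x i k * ρ x k j := by
          filter_upwards [hU.mem_nhds hx₀] with x hx
          have h := (hasDerivAt_matrix.1 (hd x hx)) i j
          rw [h.deriv, Matrix.mul_apply]
        rw [hev.iteratedDeriv_eq m,
          iteratedDeriv_sum_of_analyticAt _ m (fun k _ =>
            ((analyticOnNhd_entry hφ i k) x₀ hx₀).fun_mul ((analyticOnNhd_entry hρ k j) x₀ hx₀))]
        refine Finset.sum_eq_zero fun k _ => ?_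
        exact iteratedDeriv_mul_eq_zero m _ _ x₀
          ((analyticOnNhd_entry hφ i k) x₀ hx₀) ((analyticOnNhd_entry hρ k j) x₀ hx₀)
          (fun l hl => IH l (Nat.lt_succ_of_le hl) k j)
  obtain ⟨ε, hε, hball⟩ := Metric.isOpen_iff.1 hU x₀ hx₀
  have hev0 : ρ =ᶠ[𝓝 x₀] 0 := by
    filter_upwards [ball_mem_nhds x₀ hε] with z hz
    ext i j
    exact eqOn_zero_of_iteratedDeriv_zero
      (((analyticOnNhd_entry hρ i j).mono hball).differentiableOn) (fun n => key n i j) z hz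
  exact hρ.eqOn_zero_of_preconnected_of_eventuallyEq_zero hconn hx₀ hev0

/-- If the matrix Schwartz derivative of `f` vanishes on a nonempty connected
open set, then `f` is a matrix Möbius function there. -/
theorem matS_zero_implies_matrix_moebius {d : ℕ} (U : Set ℂ) (hU : IsOpen U)
    (hne : U.Nonempty) (hconn : IsPreconnected U)
    (f : ℂ → Matrix (Fin d) (Fin d) ℂ) (hf : AnalyticOnNhd ℂ f U)
    (hf' : ∀ x ∈ U, IsUnit (deriv f x))
    (hS : ∀ x ∈ U, matS f x = 0) :
    ∃ A B C D : Matrix (Fin d) (Fin d) ℂ,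
      IsUnit (Matrix.fromBlocks A B C D) ∧
      ∀ x ∈ U, IsUnit (x • C + D) ∧ f x = (x • A + B) * (x • C + D)⁻¹ := by
  classical
  obtain ⟨x₀, hx₀⟩ := hne
  set N : ℂ → Matrix (Fin d) (Fin d) ℂ := fun x => (deriv f x)⁻¹ with hN_def
  set g : ℂ → Matrix (Fin d) (Fin d) ℂ := fun x => N x * deriv (deriv f) x with hg_def
  have hdet : ∀ x ∈ U, IsUnit (deriv f x).det :=
    fun x hx => (Matrix.isUnit_iff_isUnit_det _).1 (hf' x hx)
  have hNf : ∀ x ∈ U, N x * deriv f x = 1 := fun x hx => Matrix.nonsing_inv_mul _ (hdet x hx)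
  have hfN : ∀ x ∈ U, deriv f x * N x = 1 := fun x hx => Matrix.mul_nonsing_inv _ (hdet x hx)
  have hfa : AnalyticOnNhd ℂ (deriv f) U := hf.deriv
  have hfaa : AnalyticOnNhd ℂ (deriv (deriv f)) U := hfa.deriv
  have hNa : AnalyticOnNhd ℂ N U := hfa.matInv hf'
  have hga : AnalyticOnNhd ℂ g U := hNa.matMul hfaa
  -- derivative of N
  have hNd : ∀ x ∈ U, HasDerivAt N (-(g x * N x)) x := by
    intro x hx
    have hNx : HasDerivAt N (deriv N x) x := ((hNa x hx).differentiableAt).hasDerivAt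
    have hfx : HasDerivAt (deriv f) (deriv (deriv f) x) x :=
      ((hfa x hx).differentiableAt).hasDerivAt
    have hprod : HasDerivAt (fun t => deriv f t * N t)
        (deriv (deriv f) x * N x + deriv f x * deriv N x) x := hfx.matMul hNx
    have hconst : HasDerivAt (fun t => deriv f t * N t) 0 x := by
      have hev : (fun t => deriv f t * N t) =ᶠ[𝓝 x] fun _ => 1 := by
        filter_upwards [hU.mem_nhds hx] with t ht
        exact hfN t ht
      exact (hasDerivAt_const x (1 : Matrix (Fin d) (Fin d) ℂ)).congr_of_eventuallyEq hev
    have heq : deriv (deriv f) x * N x + deriv f x * deriv N x = 0 :=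
      hprod.unique hconst
    have : deriv N x = -(g x * N x) := by
      have h1 : deriv f x * deriv N x = -(deriv (deriv f) x * N x) := by
        rw [eq_neg_iff_add_eq_zero, add_comm]; exact heq
      have h2 : N x * (deriv f x * deriv N x) = N x * -(deriv (deriv f) x * N x) := by rw [h1]
      rw [← mul_assoc, hNf x hx, one_mul, mul_neg, ← mul_assoc] at h2
      rw [h2, hg_def]
    rw [← this]; exact hNx
  -- Riccati equation for g
  have hgd : ∀ x ∈ U, HasDerivAt g ((2⁻¹ : ℂ) • (g x * g x)) x := by
    intro x hx
    have hgx : HasDerivAt g (deriv g x) x := ((hga x hx).differentiableAt).hasDerivAt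
    have hSx := hS x hx
    have : deriv g x = (2⁻¹ : ℂ) • (g x * g x) := by
      have h0 := sub_eq_zero.1 (by simpa [matS] using hSx)
      rw [show (fun t => (deriv f t)⁻¹ * deriv (deriv f) t) = g from rfl] at h0
      rw [h0, sq]
      try norm_num
    rwa [this] at hgx
  -- the constants
  set C : Matrix (Fin d) (Fin d) ℂ := -((2⁻¹ : ℂ) • g x₀) with hC_def
  set A : Matrix (Fin d) (Fin d) ℂ := deriv f x₀ + f x₀ * C with hA_def
  set B : Matrix (Fin d) (Fin d) ℂ := f x₀ - x₀ • A with hB_def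
  set D : Matrix (Fin d) (Fin d) ℂ := 1 - x₀ • C with hD_def
  have hAC : A - f x₀ * C = deriv f x₀ := by rw [hA_def]; abel
  have hCD0 : x₀ • C + D = 1 := by rw [hD_def]; abel
  have hAB0 : x₀ • A + B = f x₀ := by rw [hB_def]; abel
  have hgx₀ : g x₀ = -((2:ℂ) • C) := by rw [hC_def]; simp [smul_smul]
  -- the function q
  set q : ℂ → Matrix (Fin d) (Fin d) ℂ := fun x => N x * (A - f x * C) with hq_def
  have hqa : AnalyticOnNhd ℂ q U :=
    hNa.matMul (analyticOnNhd_const.sub (hf.matMul analyticOnNhd_const))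
  have hq0 : q x₀ = 1 := by
    have : q x₀ = N x₀ * (A - f x₀ * C) := rfl
    rw [this, hAC]; exact hNf x₀ hx₀
  have hqd : ∀ x ∈ U, HasDerivAt q (-(g x * q x) - C) x := by
    intro x hx
    have hdf : HasDerivAt f (deriv f x) x := ((hf x hx).differentiableAt).hasDerivAt
    have h2 : HasDerivAt (fun t => A - f t * C) (-(deriv f x * C)) x := by
      have := (hdf.matMul (hasDerivAt_const x C)).const_sub A
      simp only [mul_zero, add_zero] at this; exact this
    have h3 := (hNd x hx).matMul h2
    have e1 : N x * -(deriv f x * C) = -C := by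
      rw [mul_neg, ← mul_assoc, hNf x hx, one_mul]
    have e2 : -(g x * N x) * (A - f x * C) = -(g x * q x) := by
      rw [neg_mul, mul_assoc]
    have e3 : -(g x * N x) * (A - f x * C) + N x * -(deriv f x * C) = -(g x * q x) - C := by
      rw [e1, e2, sub_eq_add_neg]
    rw [e3] at h3
    exact h3
  -- the function r satisfies r' = (-(2⁻¹)•g) r and r x₀ = 0
  set r : ℂ → Matrix (Fin d) (Fin d) ℂ := fun x => deriv q x - C with hr_def
  have hra : AnalyticOnNhd ℂ r U := (hqa.deriv).sub analyticOnNhd_const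
  have hderivq : ∀ x ∈ U, deriv q x = -(g x * q x) - C := fun x hx => (hqd x hx).deriv
  have hr0 : r x₀ = 0 := by
    show deriv q x₀ - C = 0
    rw [hderivq x₀ hx₀, hq0, hgx₀, mul_one, neg_neg, two_smul]
    abel
  have hrd : ∀ x ∈ U, HasDerivAt r (((-2⁻¹ : ℂ) • g x) * r x) x := by
    intro x hx
    have hgx := hgd x hx
    have hqx := hqd x hx
    have hprod : HasDerivAt (fun t => -(g t * q t) - C - C)
        (-(((2⁻¹ : ℂ) • (g x * g x)) * q x + g x * (-(g x * q x) - C))) x := by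
      have := (((hgx.matMul hqx).neg).sub_const C).sub_const C
      exact this
    have hev : r =ᶠ[𝓝 x] fun t => -(g t * q t) - C - C := by
      filter_upwards [hU.mem_nhds hx] with t ht
      show deriv q t - C = _
      rw [hderivq t ht]
    have hr' : HasDerivAt r
        (-(((2⁻¹ : ℂ) • (g x * g x)) * q x + g x * (-(g x * q x) - C))) x :=
      hprod.congr_of_eventuallyEq hev
    have hrx : r x = -(g x * q x) - C - C := by
      show deriv q x - C = _
      rw [hderivq x hx]
    have halg : -(((2⁻¹ : ℂ) • (g x * g x)) * q x + g x * (-(g x * q x) - C))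
        = ((-2⁻¹ : ℂ) • g x) * r x := by
      rw [hrx]
      simp only [mul_sub, mul_neg, mul_add, smul_mul_assoc, mul_assoc, neg_smul, neg_mul]
      module
    rwa [halg] at hr'
  -- r vanishes on U
  have hrz : Set.EqOn r 0 U :=
    ode_vanish hU hconn hx₀ (φ := fun x => (-2⁻¹ : ℂ) • g x)
      (analyticOnNhd_const.matSmul hga) hra hrd hr0
  -- q equals the affine function x • C + D on U
  set s' : ℂ → Matrix (Fin d) (Fin d) ℂ := fun x => q x - (x • C + D) with hs'_def
  have hlinCD : AnalyticOnNhd ℂ (fun x : ℂ => x • C + D) U :=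
    (analyticOnNhd_id.matSmul analyticOnNhd_const).add analyticOnNhd_const
  have hlinAB : AnalyticOnNhd ℂ (fun x : ℂ => x • A + B) U :=
    (analyticOnNhd_id.matSmul analyticOnNhd_const).add analyticOnNhd_const
  have hs'a : AnalyticOnNhd ℂ s' U := hqa.sub hlinCD
  have hs'0 : s' x₀ = 0 := by
    show q x₀ - (x₀ • C + D) = 0
    rw [hq0, hCD0, sub_self]
  have hlind : ∀ x : ℂ, HasDerivAt (fun t : ℂ => t • C + D) C x := by
    intro x
    exact (((hasDerivAt_id' x).smul_const C).add_const D).congr_deriv (one_smul _ _)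
  have hlind2 : ∀ x : ℂ, HasDerivAt (fun t : ℂ => t • A + B) A x := by
    intro x
    exact (((hasDerivAt_id' x).smul_const A).add_const B).congr_deriv (one_smul _ _)
  have hs'd : ∀ x ∈ U, HasDerivAt s' ((fun _ : ℂ => (0 : Matrix (Fin d) (Fin d) ℂ)) x * s' x) x := by
    intro x hx
    have h2 : HasDerivAt q (deriv q x) x := ((hqa x hx).differentiableAt).hasDerivAt
    have h3 := h2.sub (hlind x)
    have : deriv q x - C = (fun _ : ℂ => (0 : Matrix (Fin d) (Fin d) ℂ)) x * s' x := by
      have : deriv q x - C = r x := rfl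
      rw [this, hrz hx]
      simp
    rwa [this] at h3
  have hs'z : Set.EqOn s' 0 U :=
    ode_vanish hU hconn hx₀ analyticOnNhd_const hs'a hs'd hs'0
  have hq_eq : ∀ x ∈ U, q x = x • C + D := by
    intro x hx
    have := hs'z hx
    have h0 : q x - (x • C + D) = 0 := this
    exact sub_eq_zero.1 h0
  -- the Möbius identity (as a product)
  set h2f : ℂ → Matrix (Fin d) (Fin d) ℂ := fun x => f x * (x • C + D) - (x • A + B)
    with hh_def
  have hha : AnalyticOnNhd ℂ h2f U := (hf.matMul hlinCD).sub hlinAB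
  have hh0 : h2f x₀ = 0 := by
    show f x₀ * (x₀ • C + D) - (x₀ • A + B) = 0
    rw [hCD0, hAB0, mul_one, sub_self]
  have hhd : ∀ x ∈ U, HasDerivAt h2f
      ((fun _ : ℂ => (0 : Matrix (Fin d) (Fin d) ℂ)) x * h2f x) x := by
    intro x hx
    have hdf : HasDerivAt f (deriv f x) x := ((hf x hx).differentiableAt).hasDerivAt
    have hmul := hdf.matMul (hlind x)
    have htot := hmul.sub (hlind2 x)
    have hkey : deriv f x * (x • C + D) = A - f x * C := by
      rw [← hq_eq x hx]
      show deriv f x * (N x * (A - f x * C)) = A - f x * C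
      rw [← mul_assoc, hfN x hx, one_mul]
    have : deriv f x * (x • C + D) + f x * C - A
        = (fun _ : ℂ => (0 : Matrix (Fin d) (Fin d) ℂ)) x * h2f x := by
      rw [hkey]
      simp only [zero_mul]
      abel
    rwa [this] at htot
  have hhz : Set.EqOn h2f 0 U :=
    ode_vanish hU hconn hx₀ analyticOnNhd_const hha hhd hh0
  have hfCD : ∀ x ∈ U, f x * (x • C + D) = x • A + B := by
    intro x hx
    have h0 : f x * (x • C + D) - (x • A + B) = 0 := hhz hx
    exact sub_eq_zero.1 h0
  -- invertibility of the block matrix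
  set L : Matrix (Fin d ⊕ Fin d) (Fin d ⊕ Fin d) ℂ := fromBlocks 1 (-(f x₀)) 0 1 with hL_def
  set L' : Matrix (Fin d ⊕ Fin d) (Fin d ⊕ Fin d) ℂ := fromBlocks 1 (f x₀) 0 1 with hL'_def
  set R : Matrix (Fin d ⊕ Fin d) (Fin d ⊕ Fin d) ℂ := fromBlocks (x₀ • 1) 1 1 0 with hR_def
  set R' : Matrix (Fin d ⊕ Fin d) (Fin d ⊕ Fin d) ℂ := fromBlocks 0 1 1 (-(x₀ • 1)) with hR'_def
  set K : Matrix (Fin d ⊕ Fin d) (Fin d ⊕ Fin d) ℂ := fromBlocks 0 (deriv f x₀) 1 C with hK_def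
  set K' : Matrix (Fin d ⊕ Fin d) (Fin d ⊕ Fin d) ℂ :=
    fromBlocks (-(C * N x₀)) 1 (N x₀) 0 with hK'_def
  set Mb : Matrix (Fin d ⊕ Fin d) (Fin d ⊕ Fin d) ℂ := fromBlocks A B C D with hMb_def
  have hLMR : L * (Mb * R) = K := by
    rw [hMb_def, hL_def, hR_def, hK_def, fromBlocks_multiply, fromBlocks_multiply]
    have e11 : (1 : Matrix (Fin d) (Fin d) ℂ) * (A * (x₀ • 1) + B * 1)
        + -(f x₀) * (C * (x₀ • 1) + D * 1) = 0 := by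
      simp only [Matrix.mul_smul, mul_one, one_mul, zero_mul, mul_zero, add_zero, zero_add]
      rw [show x₀ • A + B = f x₀ from hAB0, show x₀ • C + D = 1 from hCD0]
      simp
    have e12 : (1 : Matrix (Fin d) (Fin d) ℂ) * (A * 1 + B * 0) + -(f x₀) * (C * 1 + D * 0)
        = deriv f x₀ := by
      simp only [mul_one, mul_zero, add_zero, one_mul, neg_mul]
      rw [← hAC]; abel
    have e21 : (0 : Matrix (Fin d) (Fin d) ℂ) * (A * (x₀ • 1) + B * 1)
        + 1 * (C * (x₀ • 1) + D * 1) = 1 := by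
      simp only [Matrix.mul_smul, mul_one, one_mul, zero_mul, mul_zero, add_zero, zero_add]
      exact hCD0
    have e22 : (0 : Matrix (Fin d) (Fin d) ℂ) * (A * 1 + B * 0) + 1 * (C * 1 + D * 0) = C := by
      simp
    rw [e11, e12, e21, e22]
  have hLL' : L * L' = 1 := by
    rw [hL_def, hL'_def, fromBlocks_multiply]
    rw [← fromBlocks_one]
    congr 1 <;> simp
  have hL'L : L' * L = 1 := by
    rw [hL_def, hL'_def, fromBlocks_multiply]
    rw [← fromBlocks_one]
    congr 1 <;> simp
  have hRR' : R * R' = 1 := by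
    rw [hR_def, hR'_def, fromBlocks_multiply]
    rw [← fromBlocks_one]
    congr 1 <;> simp [Matrix.mul_smul, Matrix.smul_mul]
  have hR'R : R' * R = 1 := by
    rw [hR_def, hR'_def, fromBlocks_multiply]
    rw [← fromBlocks_one]
    congr 1 <;> simp [Matrix.mul_smul, Matrix.smul_mul]
  have hKK' : K * K' = 1 := by
    rw [hK_def, hK'_def, fromBlocks_multiply]
    rw [← fromBlocks_one]
    congr 1 <;> simp [hfN x₀ hx₀]
  have hK'K : K' * K = 1 := by
    rw [hK_def, hK'_def, fromBlocks_multiply]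
    rw [← fromBlocks_one]
    congr 1 <;> simp [hNf x₀ hx₀, mul_assoc]
  have hMb_eq : Mb = L' * K * R' := by
    rw [← hLMR, ← mul_assoc L' L, hL'L, one_mul, mul_assoc, hRR', mul_one]
  have hMunit : IsUnit Mb := by
    rw [hMb_eq]
    have hUL' : IsUnit L' := ⟨⟨L', L, hL'L, hLL'⟩, rfl⟩
    have hUK : IsUnit K := ⟨⟨K, K', hKK', hK'K⟩, rfl⟩
    have hUR' : IsUnit R' := ⟨⟨R', R, hR'R, hRR'⟩, rfl⟩
    exact (hUL'.mul hUK).mul hUR' 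
  refine ⟨A, B, C, D, hMunit, fun x hx => ?_⟩
  have hmulx : f x * (x • C + D) = x • A + B := hfCD x hx
  have hunit : IsUnit (x • C + D) := by
    rw [← Matrix.mulVec_injective_iff_isUnit]
    intro v w hvw
    set u : Fin d → ℂ := v - w with hu_def
    have hu0 : (x • C + D) *ᵥ u = 0 := by
      rw [hu_def, Matrix.mulVec_sub, sub_eq_zero]
      exact hvw
    have hAB : (x • A + B) *ᵥ u = 0 := by
      rw [← hmulx, ← Matrix.mulVec_mulVec, hu0, Matrix.mulVec_zero]
    have hblock : Mb *ᵥ (Sum.elim (x • u) u) = 0 := by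
      rw [hMb_def, Matrix.fromBlocks_mulVec]
      simp only [Sum.elim_comp_inl, Sum.elim_comp_inr]
      have e1 : A *ᵥ (x • u) + B *ᵥ u = 0 := by
        rw [Matrix.mulVec_smul, ← Matrix.smul_mulVec, ← Matrix.add_mulVec]
        exact hAB
      have e2 : C *ᵥ (x • u) + D *ᵥ u = 0 := by
        rw [Matrix.mulVec_smul, ← Matrix.smul_mulVec, ← Matrix.add_mulVec]
        exact hu0
      rw [e1, e2]
      funext i
      cases i <;> rfl
    have hinj := Matrix.mulVec_injective_iff_isUnit.2 hMunit
    have : Sum.elim (x • u) u = 0 := by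
      apply hinj
      rw [hblock, Matrix.mulVec_zero]
    have hu : u = 0 := by
      funext i
      exact congrFun this (Sum.inr i)
    rw [hu_def] at hu
    exact sub_eq_zero.1 hu
  refine ⟨hunit, ?_⟩
  rw [← hmulx, mul_assoc,
    Matrix.mul_nonsing_inv _ ((Matrix.isUnit_iff_isUnit_det _).1 hunit), mul_one]
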